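/- Let α ≥ 1 and β ≥ 0 be integers, φ ∈ ℂ[X], let F = (P,Q) ∈ ℂ[X,Y]² be a polynomial mapping with det J_F equal to a nonzero constant c ∈ ℂ, and let G ∈ ℂ[X,Y]² be the R-dual of F. Then necessarily β ≥ α + 1, and det J_G(x,y) = −c·α·x^{β−α−1} for all (x,y) ∈ ℂ². -/

import Mathlib

open MvPolynomial Filter

abbrev PolyPair := MvPolynomial (Fin 2) ℂ × MvPolynomial (Fin 2) ℂ

noncomputable def eval2 (p : MvPolynomial (Fin 2) ℂ) (x y : ℂ) : ℂ :=
  MvPolynomial.eval ![x, y] p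

noncomputable def jacDet (P Q : MvPolynomial (Fin 2) ℂ) : MvPolynomial (Fin 2) ℂ :=
  pderiv 0 P * pderiv 1 Q - pderiv 1 P * pderiv 0 Q

noncomputable def polyMap (F : PolyPair) (p : ℂ × ℂ) : ℂ × ℂ :=
  (eval2 F.1 p.1 p.2, eval2 F.2 p.1 p.2)

/-- `F` is a Keller mapping: its Jacobian determinant is a nonzero constant. -/
def IsKeller (F : PolyPair) : Prop :=
  ∃ c : ℂ, c ≠ 0 ∧ jacDet F.1 F.2 = MvPolynomial.C c

/-- `(u₀,v₀)` is a singular point of the plane curve `{H = 0}`. -/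
def IsSingularPoint (H : MvPolynomial (Fin 2) ℂ) (p : ℂ × ℂ) : Prop :=
  eval2 H p.1 p.2 = 0 ∧ eval2 (pderiv 0 H) p.1 p.2 = 0 ∧ eval2 (pderiv 1 H) p.1 p.2 = 0

/-- `G` is the `R`-dual of `F`, where `R(x,y) = (x^{-α}, x^β y + x^{-α} φ(x))`. -/
def IsRDual (F G : PolyPair) (α β : ℕ) (φ : Polynomial ℂ) : Prop :=
  ∀ x : ℂ, x ≠ 0 → ∀ y : ℂ,
    polyMap G (x, y) = polyMap F ((x ^ α)⁻¹, x ^ β * y + (x ^ α)⁻¹ * Polynomial.eval x φ)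

/-- `p` is an asymptotic value of `F` : a limit of `F` along a curve tending to infinity. -/
def IsAsympValue (F : PolyPair) (p : ℂ × ℂ) : Prop :=
  ∃ γ : ℝ → ℂ × ℂ, Continuous γ ∧ Tendsto (fun t => ‖γ t‖) atTop atTop ∧
    Tendsto (fun t => polyMap F (γ t)) atTop (nhds p)

/-- `F` is a polynomial automorphism of `ℂ²`. -/
def IsPolyAuto (F : PolyPair) : Prop :=
  ∃ Finv : PolyPair, (∀ p, polyMap F (polyMap Finv p) = p) ∧
    (∀ p, polyMap Finv (polyMap F p) = p)

lemma hasFDerivAt_eval2 (p : MvPolynomial (Fin 2) ℂ) (q : ℂ × ℂ) :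
    HasFDerivAt (fun r : ℂ × ℂ => eval2 p r.1 r.2)
      (eval2 (pderiv 0 p) q.1 q.2 • ContinuousLinearMap.fst ℂ ℂ ℂ
        + eval2 (pderiv 1 p) q.1 q.2 • ContinuousLinearMap.snd ℂ ℂ ℂ) q := by
  induction p using MvPolynomial.induction_on with
  | C a =>
      convert hasFDerivAt_const (𝕜 := ℂ) a q using 1
      · funext r; simp [eval2]
      · ext r <;> simp [eval2]
  | add p r hp hr =>
      convert hp.add hr using 1
      · rfl
      · rfl
      · rfl
      · rfl
      · rfl
      · ext r; simp [eval2]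
      · ext r <;> simp [eval2] <;> ring
  | mul_X p n hp =>
      have hX : HasFDerivAt (fun r : ℂ × ℂ => eval2 (X n) r.1 r.2)
          (if n = 0 then ContinuousLinearMap.fst ℂ ℂ ℂ else ContinuousLinearMap.snd ℂ ℂ ℂ) q := by
        fin_cases n
        · simpa [eval2] using hasFDerivAt_fst (p := q)
        · simpa [eval2] using hasFDerivAt_snd (p := q)
      have := hp.mul hX
      convert this using 1
      · rfl
      · rfl
      · rfl
      · rfl
      · rfl
      · ext r; simp [eval2]
      · fin_cases n <;> ext r <;>
          simp [eval2, pderiv_mul, pderiv_X, Pi.single, Function.update, smul_eq_mul] <;> ring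

lemma hasDerivAt_eval2_comp (p : MvPolynomial (Fin 2) ℂ) {u v : ℂ → ℂ} {u' v' x : ℂ}
    (hu : HasDerivAt u u' x) (hv : HasDerivAt v v' x) :
    HasDerivAt (fun t => eval2 p (u t) (v t))
      (eval2 (pderiv 0 p) (u x) (v x) * u' + eval2 (pderiv 1 p) (u x) (v x) * v') x := by
  have h := (hasFDerivAt_eval2 p (u x, v x)).comp_hasDerivAt x (hu.prodMk hv)
  simp only [smul_eq_mul] at h
  exact h

lemma hasDerivAt_eval2_x (p : MvPolynomial (Fin 2) ℂ) (x y : ℂ) :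
    HasDerivAt (fun t => eval2 p t y) (eval2 (pderiv 0 p) x y) x := by
  simpa using hasDerivAt_eval2_comp p (hasDerivAt_id x) (hasDerivAt_const x y)

lemma hasDerivAt_eval2_y (p : MvPolynomial (Fin 2) ℂ) (x y : ℂ) :
    HasDerivAt (fun t => eval2 p x t) (eval2 (pderiv 1 p) x y) y := by
  simpa using hasDerivAt_eval2_comp p (hasDerivAt_const y x) (hasDerivAt_id y)

lemma key_identity (α β : ℕ) (hα : 1 ≤ α) (φ : Polynomial ℂ) (F : PolyPair) (c : ℂ)
    (hdet : jacDet F.1 F.2 = MvPolynomial.C c) (G : PolyPair) (hG : IsRDual F G α β φ)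
    {x : ℂ} (hx : x ≠ 0) (y : ℂ) :
    eval2 (jacDet G.1 G.2) x y * x ^ (α + 1) = -c * α * x ^ β := by
  obtain ⟨a, rfl⟩ : ∃ a, α = a + 1 := ⟨α - 1, (Nat.succ_pred_eq_of_pos hα).symm⟩
  set α := a + 1
  have hxα : x ^ α ≠ 0 := pow_ne_zero _ hx
  set u : ℂ → ℂ := fun t => (t ^ α)⁻¹ with hu_def
  set v : ℂ → ℂ := fun t => t ^ β * y + (t ^ α)⁻¹ * Polynomial.eval t φ with hv_def
  have hu : HasDerivAt u (-(α * x ^ (α - 1)) / (x ^ α) ^ 2) x :=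
    (hasDerivAt_pow α x).inv hxα
  set u' : ℂ := -(α * x ^ (α - 1)) / (x ^ α) ^ 2 with hu'_def
  obtain ⟨v', hv⟩ : ∃ v', HasDerivAt v v' x :=
    ⟨_, (((hasDerivAt_pow β x).mul_const y).add (hu.mul (φ.hasDerivAt x)))⟩
  set U : ℂ := u x
  set W : ℂ := v x
  set Px := eval2 (pderiv 0 F.1) U W
  set Py := eval2 (pderiv 1 F.1) U W
  set Qx := eval2 (pderiv 0 F.2) U W
  set Qy := eval2 (pderiv 1 F.2) U W
  -- the two maps agree near x / on lines
  have heq1 : (fun t => eval2 G.1 t y) =ᶠ[nhds x] fun t => eval2 F.1 (u t) (v t) := by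
    filter_upwards [isOpen_compl_singleton.mem_nhds hx] with t ht
    simpa [polyMap, u, v] using congrArg Prod.fst (hG t ht y)
  have heq2 : (fun t => eval2 G.2 t y) =ᶠ[nhds x] fun t => eval2 F.2 (u t) (v t) := by
    filter_upwards [isOpen_compl_singleton.mem_nhds hx] with t ht
    simpa [polyMap, u, v] using congrArg Prod.snd (hG t ht y)
  have hd1x : eval2 (pderiv 0 G.1) x y = Px * u' + Py * v' :=
    (hasDerivAt_eval2_x G.1 x y).unique
      ((hasDerivAt_eval2_comp F.1 hu hv).congr_of_eventuallyEq heq1)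
  have hd2x : eval2 (pderiv 0 G.2) x y = Qx * u' + Qy * v' :=
    (hasDerivAt_eval2_x G.2 x y).unique
      ((hasDerivAt_eval2_comp F.2 hu hv).congr_of_eventuallyEq heq2)
  -- y-direction
  have hlin : HasDerivAt (fun s : ℂ => x ^ β * s + (x ^ α)⁻¹ * Polynomial.eval x φ)
      (x ^ β) y := by
    simpa using (((hasDerivAt_id y).const_mul (x ^ β)).add_const ((x ^ α)⁻¹ * Polynomial.eval x φ))
  have hcomp1 : HasDerivAt (fun s => eval2 F.1 U (x ^ β * s + (x ^ α)⁻¹ * Polynomial.eval x φ))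
      (Py * x ^ β) y := by
    have h := hasDerivAt_eval2_comp F.1 (hasDerivAt_const y U) hlin
    simpa [W, v] using h
  have hcomp2 : HasDerivAt (fun s => eval2 F.2 U (x ^ β * s + (x ^ α)⁻¹ * Polynomial.eval x φ))
      (Qy * x ^ β) y := by
    have h := hasDerivAt_eval2_comp F.2 (hasDerivAt_const y U) hlin
    simpa [W, v] using h
  have heqy1 : (fun s => eval2 G.1 x s)
      = fun s => eval2 F.1 U (x ^ β * s + (x ^ α)⁻¹ * Polynomial.eval x φ) := by
    funext s; simpa [polyMap, U, u] using congrArg Prod.fst (hG x hx s)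
  have heqy2 : (fun s => eval2 G.2 x s)
      = fun s => eval2 F.2 U (x ^ β * s + (x ^ α)⁻¹ * Polynomial.eval x φ) := by
    funext s; simpa [polyMap, U, u] using congrArg Prod.snd (hG x hx s)
  have hd1y : eval2 (pderiv 1 G.1) x y = Py * x ^ β :=
    (hasDerivAt_eval2_y G.1 x y).unique (heqy1 ▸ hcomp1)
  have hd2y : eval2 (pderiv 1 G.2) x y = Qy * x ^ β :=
    (hasDerivAt_eval2_y G.2 x y).unique (heqy2 ▸ hcomp2)
  -- Keller condition at (U, W)
  have hJF : Px * Qy - Py * Qx = c := by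
    have h := congrArg (fun p => eval2 p U W) hdet
    simpa [jacDet, eval2, Px, Py, Qx, Qy] using h
  have hJG : eval2 (jacDet G.1 G.2) x y
      = (Px * u' + Py * v') * (Qy * x ^ β) - (Py * x ^ β) * (Qx * u' + Qy * v') := by
    simp [jacDet, eval2] at hd1x hd2x hd1y hd2y ⊢
    rw [hd1x, hd2x, hd1y, hd2y]
  rw [hJG]
  have hexpand : (Px * u' + Py * v') * (Qy * x ^ β) - (Py * x ^ β) * (Qx * u' + Qy * v')
      = (Px * Qy - Py * Qx) * u' * x ^ β := by ring
  rw [hexpand, hJF, hu'_def]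
  have ha : α - 1 = a := rfl
  rw [ha]
  field_simp
  ring

/-- if `det J_F = c ≠ 0` and `G` is the `R`-dual of `F`, then
necessarily `β ≥ α + 1` and `det J_G(x,y) = -c·α·x^{β-α-1}`. -/
theorem jacobian_of_dual (α β : ℕ) (hα : 1 ≤ α)
    (φ : Polynomial ℂ) (hφ : φ.natDegree < α + β)
    (F : PolyPair) (c : ℂ) (hc : c ≠ 0)
    (hdet : jacDet F.1 F.2 = MvPolynomial.C c)
    (G : PolyPair) (hG : IsRDual F G α β φ) :
    α + 1 ≤ β ∧
      ∀ x y : ℂ, eval2 (jacDet G.1 G.2) x y = -c * (α : ℂ) * x ^ (β - α - 1) := by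
  have key : ∀ x : ℂ, x ≠ 0 → ∀ y : ℂ,
      eval2 (jacDet G.1 G.2) x y * x ^ (α + 1) = -c * α * x ^ β :=
    fun x hx y => key_identity α β hα φ F c hdet G hG hx y
  have hcα : -c * (α : ℂ) ≠ 0 := by
    have : (α : ℂ) ≠ 0 := Nat.cast_ne_zero.mpr (by omega)
    simp [hc, this]
  have hβ : α + 1 ≤ β := by
    by_contra hcon
    push_neg at hcon
    set k : ℕ := α + 1 - β with hk
    have hk1 : 1 ≤ k := by omega
    have hkey' : ∀ x : ℂ, x ≠ 0 → eval2 (jacDet G.1 G.2) x 0 * x ^ k = -c * α := by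
      intro x hx
      have h := key x hx 0
      have hsplit : x ^ (α + 1) = x ^ k * x ^ β := by
        rw [← pow_add]; congr 1; omega
      rw [hsplit, ← mul_assoc] at h
      exact mul_right_cancel₀ (pow_ne_zero _ hx) h
    -- f is continuous at 0 and equals const -cα on punctured nbhd
    have hfc : ContinuousAt (fun x : ℂ => eval2 (jacDet G.1 G.2) x 0 * x ^ k) 0 :=
      ((hasDerivAt_eval2_x (jacDet G.1 G.2) 0 0).continuousAt).mul ((continuous_pow k).continuousAt)
    have h1 : Tendsto (fun x : ℂ => eval2 (jacDet G.1 G.2) x 0 * x ^ k)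
        (nhdsWithin 0 {(0:ℂ)}ᶜ) (nhds 0) := by
      have h0 := hfc.tendsto.mono_left (nhdsWithin_le_nhds (s := {(0:ℂ)}ᶜ))
      simpa [zero_pow (by omega : k ≠ 0)] using h0
    have h2 : Tendsto (fun x : ℂ => eval2 (jacDet G.1 G.2) x 0 * x ^ k)
        (nhdsWithin 0 {(0:ℂ)}ᶜ) (nhds (-c * α)) := by
      refine Tendsto.congr' ?_ tendsto_const_nhds
      filter_upwards [self_mem_nhdsWithin] with x hx
      exact (hkey' x hx).symm
    exact hcα (tendsto_nhds_unique h2 h1)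
  refine ⟨hβ, ?_⟩
  obtain ⟨b, hb⟩ : ∃ b, β = b + (α + 1) := ⟨β - α - 1, by omega⟩
  have hbeq : β - α - 1 = b := by omega
  have hne : ∀ x : ℂ, x ≠ 0 → ∀ y : ℂ,
      eval2 (jacDet G.1 G.2) x y = -c * (α : ℂ) * x ^ b := by
    intro x hx y
    have h := key x hx y
    rw [hb, pow_add x b (α + 1), ← mul_assoc] at h
    exact mul_right_cancel₀ (pow_ne_zero _ hx) h
  intro x y
  rw [hbeq]
  rcases eq_or_ne x 0 with rfl | hx
  · have hgc : ContinuousAt (fun t : ℂ => eval2 (jacDet G.1 G.2) t y) 0 :=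
      (hasDerivAt_eval2_x (jacDet G.1 G.2) 0 y).continuousAt
    have h1 : Tendsto (fun t : ℂ => eval2 (jacDet G.1 G.2) t y)
        (nhdsWithin 0 {(0:ℂ)}ᶜ) (nhds (eval2 (jacDet G.1 G.2) 0 y)) :=
      hgc.tendsto.mono_left nhdsWithin_le_nhds
    have h2 : Tendsto (fun t : ℂ => eval2 (jacDet G.1 G.2) t y)
        (nhdsWithin 0 {(0:ℂ)}ᶜ) (nhds (-c * (α : ℂ) * (0:ℂ) ^ b)) := by
      have hcont : Tendsto (fun t : ℂ => -c * (α : ℂ) * t ^ b)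
          (nhdsWithin 0 {(0:ℂ)}ᶜ) (nhds (-c * (α : ℂ) * (0:ℂ) ^ b)) :=
        ((continuous_const.mul (continuous_pow b)).tendsto 0).mono_left nhdsWithin_le_nhds
      refine Tendsto.congr' ?_ hcont
      filter_upwards [self_mem_nhdsWithin] with t ht
      exact (hne t ht y).symm
    exact tendsto_nhds_unique h1 h2
  · exact hne x hx y
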